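/- Let u : I → ℝ be hyperbolic p-convex and w : I → ℝ positive, integrable and symmetric about (a+b)/2 on [a,b] ⊂ I. Then u((a+b)/2) ∫_a^b cosh[p(x-(a+b)/2)] w(x) dx ≤ ∫_a^b u(x)w(x) dx ≤ ((u(a)+u(b))/2) (cosh(p(b-a)/2))^{-1} ∫_a^b cosh[p(x-(a+b)/2)] w(x) dx. -/

import Mathlib

open Real MeasureTheory

def HypPConvexOn (p : ℝ) (I : Set ℝ) (f : ℝ → ℝ) : Prop :=
  ∀ a ∈ I, ∀ b ∈ I, a < b → ∀ x ∈ Set.Icc a b,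
    f x ≤ (Real.sinh (p * (b - x)) / Real.sinh (p * (b - a))) * f a +
          (Real.sinh (p * (x - a)) / Real.sinh (p * (b - a))) * f b

theorem dragomir_hermite_hadamard_fejer
    (I : Set ℝ) (p : ℝ) (hp : 0 < p) (u w : ℝ → ℝ)
    (hconv : HypPConvexOn p I u)
    (a b : ℝ) (ha : a ∈ I) (hb : b ∈ I) (hab : a < b) (hIab : Set.Icc a b ⊆ I)
    (hu : IntervalIntegrable u volume a b)
    (hw : IntervalIntegrable w volume a b)
    (hwpos : ∀ x ∈ Set.Icc a b, 0 < w x)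
    (hwsym : ∀ x ∈ Set.Icc a b, w (a + b - x) = w x) :
    u ((a + b) / 2) * (∫ x in a..b, Real.cosh (p * (x - (a + b) / 2)) * w x) ≤
        (∫ x in a..b, u x * w x) ∧
      (∫ x in a..b, u x * w x) ≤
        ((u a + u b) / 2) * (Real.cosh (p * (b - a) / 2))⁻¹ *
          ∫ x in a..b, Real.cosh (p * (x - (a + b) / 2)) * w x := by
  set m := (a + b) / 2 with hm
  have hS : (0:ℝ) < Real.sinh (p * (b - a)) := Real.sinh_pos_iff.2 (by nlinarith)
  have hcs : (0:ℝ) < Real.cosh (p * (b - a) / 2) := Real.cosh_pos _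
  -- auxiliary midpoint lemma
  have lowaux : ∀ x z : ℝ, x ∈ Set.Icc a b → z ∈ Set.Icc a b → x < z → x + z = a + b →
      u m * Real.cosh (p * (z - m)) ≤ (u x + u z) / 2 := by
    intro x z hx hz hxz hsum
    have hzm : m < z := by simp only [hm]; linarith
    have hct : (0:ℝ) < Real.cosh (p * (z - m)) := Real.cosh_pos _
    have hst : (0:ℝ) < Real.sinh (p * (z - m)) := Real.sinh_pos_iff.2 (by nlinarith)
    have hmem : m ∈ Set.Icc x z := ⟨by simp only [hm]; linarith, hzm.le⟩
    have h := hconv x (hIab hx) z (hIab hz) hxz m hmem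
    rw [show p * (m - x) = p * (z - m) by simp only [hm]; linear_combination (-p) * hsum,
        show p * (z - x) = 2 * (p * (z - m)) by simp only [hm]; linear_combination (-p) * hsum,
        Real.sinh_two_mul] at h
    have hh : Real.sinh (p * (z - m)) / (2 * Real.sinh (p * (z - m)) * Real.cosh (p * (z - m))) * u x
        + Real.sinh (p * (z - m)) / (2 * Real.sinh (p * (z - m)) * Real.cosh (p * (z - m))) * u z
        = (u x + u z) / (2 * Real.cosh (p * (z - m))) := by
      field_simp
    rw [hh] at h
    have h2 := mul_le_mul_of_nonneg_right h hct.le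
    have he : (u x + u z) / (2 * Real.cosh (p * (z - m))) * Real.cosh (p * (z - m))
        = (u x + u z) / 2 := by field_simp
    linarith [h2, he ▸ h2]
  -- lower pointwise bound
  have lower : ∀ x ∈ Set.Icc a b, u m * Real.cosh (p * (x - m)) ≤ (u x + u (a + b - x)) / 2 := by
    intro x hx
    have hx' : a + b - x ∈ Set.Icc a b := ⟨by linarith [hx.2], by linarith [hx.1]⟩
    rcases lt_trichotomy x m with h | h | h
    · have := lowaux x (a + b - x) hx hx' (by simp only [hm] at h; linarith) (by ring)
      rw [show p * (a + b - x - m) = -(p * (x - m)) by simp only [hm]; ring,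
          Real.cosh_neg] at this
      exact this
    · have hx2 : a + b - x = x := by simp only [hm] at h; linarith
      rw [h, sub_self, mul_zero, Real.cosh_zero, mul_one,
        show a + b - m = m by simp only [hm]; ring]
      linarith
    · have := lowaux (a + b - x) x hx' hx (by simp only [hm] at h; linarith) (by ring)
      linarith
  -- upper pointwise bound
  have upper : ∀ x ∈ Set.Icc a b, (u x + u (a + b - x)) / 2 ≤
      (u a + u b) / 2 * (Real.cosh (p * (b - a) / 2))⁻¹ * Real.cosh (p * (x - m)) := by
    intro x hx
    have hx' : a + b - x ∈ Set.Icc a b := ⟨by linarith [hx.2], by linarith [hx.1]⟩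
    have h1 := hconv a ha b hb hab x hx
    have h2 := hconv a ha b hb hab (a + b - x) hx'
    rw [show b - (a + b - x) = x - a by ring, show a + b - x - a = b - x by ring] at h2
    have hratio : Real.sinh (p * (b - x)) / Real.sinh (p * (b - a))
        + Real.sinh (p * (x - a)) / Real.sinh (p * (b - a))
        = Real.cosh (p * (x - m)) / Real.cosh (p * (b - a) / 2) := by
      rw [← add_div, div_eq_div_iff hS.ne' hcs.ne']
      rw [show p * (b - x) = p * (b - a) / 2 - p * (x - m) by simp only [hm]; ring,
          show p * (x - a) = p * (b - a) / 2 + p * (x - m) by simp only [hm]; ring,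
          show p * (b - a) = 2 * (p * (b - a) / 2) by ring,
          Real.sinh_sub, Real.sinh_add, Real.sinh_two_mul]
      ring
    have hsum : u x + u (a + b - x) ≤ (Real.sinh (p * (b - x)) / Real.sinh (p * (b - a))
        + Real.sinh (p * (x - a)) / Real.sinh (p * (b - a))) * (u a + u b) := by
      nlinarith [h1, h2]
    rw [hratio] at hsum
    have : (u a + u b) / 2 * (Real.cosh (p * (b - a) / 2))⁻¹ * Real.cosh (p * (x - m))
        = Real.cosh (p * (x - m)) / Real.cosh (p * (b - a) / 2) * (u a + u b) / 2 := by
      field_simp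
    linarith [this ▸ le_refl ((u a + u b) / 2 * (Real.cosh (p * (b - a) / 2))⁻¹ * Real.cosh (p * (x - m)))]
  -- boundedness of u on [a,b]
  have hub : ∀ x ∈ Set.Icc a b, u x ≤ |u a| + |u b| := by
    intro x hx
    have h := hconv a ha b hb hab x hx
    have h1a : 0 ≤ Real.sinh (p * (b - x)) / Real.sinh (p * (b - a)) :=
      div_nonneg (Real.sinh_nonneg_iff.2 (by nlinarith [hx.2])) hS.le
    have h1b : Real.sinh (p * (b - x)) / Real.sinh (p * (b - a)) ≤ 1 :=
      (div_le_one hS).2 (Real.sinh_le_sinh.2 (by nlinarith [hx.1]))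
    have h2a : 0 ≤ Real.sinh (p * (x - a)) / Real.sinh (p * (b - a)) :=
      div_nonneg (Real.sinh_nonneg_iff.2 (by nlinarith [hx.1])) hS.le
    have h2b : Real.sinh (p * (x - a)) / Real.sinh (p * (b - a)) ≤ 1 :=
      (div_le_one hS).2 (Real.sinh_le_sinh.2 (by nlinarith [hx.2]))
    nlinarith [le_abs_self (u a), le_abs_self (u b), abs_nonneg (u a), abs_nonneg (u b)]
  set K : ℝ := |u a| + |u b| + 2 * |u m| * Real.cosh (p * (b - a) / 2) with hK
  have hK0 : 0 ≤ K := by positivity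
  have hbd : ∀ x ∈ Set.Icc a b, |u x| ≤ K := by
    intro x hx
    have hx' : a + b - x ∈ Set.Icc a b := ⟨by linarith [hx.2], by linarith [hx.1]⟩
    have hl := lower x hx
    have hct1 : (1:ℝ) ≤ Real.cosh (p * (x - m)) := Real.one_le_cosh _
    have hcts : Real.cosh (p * (x - m)) ≤ Real.cosh (p * (b - a) / 2) := by
      rw [Real.cosh_le_cosh, abs_of_nonneg (by nlinarith : (0:ℝ) ≤ p * (b - a) / 2), abs_le]
      simp only [hm]
      constructor
      · nlinarith [hx.1]
      · nlinarith [hx.2]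
    have hp1 : 0 ≤ (u m + |u m|) * Real.cosh (p * (x - m)) :=
      mul_nonneg (by linarith [neg_abs_le (u m)]) (Real.cosh_pos _).le
    have hp2 : 0 ≤ |u m| * (Real.cosh (p * (b - a) / 2) - Real.cosh (p * (x - m))) :=
      mul_nonneg (abs_nonneg _) (by linarith)
    have hp3 : 0 ≤ |u m| * Real.cosh (p * (b - a) / 2) := mul_nonneg (abs_nonneg _) hcs.le
    rw [abs_le, hK]
    constructor
    · nlinarith [hl, hub (a + b - x) hx', hp1, hp2]
    · nlinarith [hub x hx, hp3]
  -- integrability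
  have huw : IntervalIntegrable (fun x => u x * w x) volume a b := by
    rw [intervalIntegrable_iff_integrableOn_Ioc_of_le hab.le] at hu hw ⊢
    refine (hw.norm.const_mul K).mono' (hu.aestronglyMeasurable.mul hw.aestronglyMeasurable) ?_
    filter_upwards [ae_restrict_mem measurableSet_Ioc] with x hx
    rw [norm_mul]
    exact mul_le_mul_of_nonneg_right (hbd x (Set.Ioc_subset_Icc_self hx)) (norm_nonneg _)
  have huw2 : IntervalIntegrable (fun x => u (a + b - x) * w (a + b - x)) volume a b := by
    have := huw.comp_sub_left (a + b)
    rw [show a + b - a = b by ring, show a + b - b = a by ring] at this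
    exact this.symm
  have hcw : IntervalIntegrable (fun x => Real.cosh (p * (x - m)) * w x) volume a b :=
    hw.continuousOn_mul (by fun_prop)
  -- symmetrized integral identity
  have hA : (∫ x in a..b, u (a + b - x) * w (a + b - x)) = ∫ x in a..b, u x * w x := by
    have := intervalIntegral.integral_comp_sub_left (a := a) (b := b) (fun y => u y * w y) (a + b)
    rw [show a + b - a = b by ring, show a + b - b = a by ring] at this
    exact this
  set f2 : ℝ → ℝ := fun x => (u x * w x + u (a + b - x) * w (a + b - x)) / 2 with hf2def
  have hf2 : IntervalIntegrable f2 volume a b := (huw.add huw2).div_const 2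
  have hf2eq : (∫ x in a..b, f2 x) = ∫ x in a..b, u x * w x := by
    simp only [hf2def]
    rw [intervalIntegral.integral_div, intervalIntegral.integral_add huw huw2, hA]
    ring
  -- pointwise bounds with weight
  have hloww : ∀ x ∈ Set.Icc a b, u m * (Real.cosh (p * (x - m)) * w x) ≤ f2 x := by
    intro x hx
    have hx' : a + b - x ∈ Set.Icc a b := ⟨by linarith [hx.2], by linarith [hx.1]⟩
    have h := mul_le_mul_of_nonneg_right (lower x hx) (hwpos x hx).le
    simp only [hf2def]
    rw [hwsym x hx]
    nlinarith [h]
  have huppw : ∀ x ∈ Set.Icc a b, f2 x ≤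
      (u a + u b) / 2 * (Real.cosh (p * (b - a) / 2))⁻¹ * (Real.cosh (p * (x - m)) * w x) := by
    intro x hx
    have h := mul_le_mul_of_nonneg_right (upper x hx) (hwpos x hx).le
    simp only [hf2def]
    rw [hwsym x hx]
    nlinarith [h]
  constructor
  · rw [← intervalIntegral.integral_const_mul, ← hf2eq]
    exact intervalIntegral.integral_mono_on hab.le (hcw.const_mul _) hf2 hloww
  · rw [mul_assoc, ← intervalIntegral.integral_const_mul, ← hf2eq]
    have := intervalIntegral.integral_mono_on hab.le hf2
      ((hcw.const_mul ((u a + u b) / 2 * (Real.cosh (p * (b - a) / 2))⁻¹))) huppw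
    simpa [mul_assoc] using this
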